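/- Let q₁,…,q_N > 0. As α → ∞, the maximizer structure of ∑_n U_α(q_n) tends to max-min fairness in the following precise sense: for two quality vectors q, q' ∈ (0,∞)^N with min_n q_n > min_n q'_n, there exists α₀ such that for all α > α₀ (α ≠ 1), ∑_n U_α(q_n) > ∑_n U_α(q'_n), where U_α(q) = q^{1-α}/(1-α). -/
import Mathlib


open Finset

/-- As α → ∞ the α-fairness objective tends to max-min fairness: if the
minimum entry of q is strictly larger than the minimum entry of q', then for
all sufficiently large α (α ≠ 1) the α-fair objective strictly prefers q. -/
theorem alpha_fair_maxmin (N : ℕ) (hN : 0 < N) (q q' : Fin N → ℝ)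
    (hq : ∀ n, 0 < q n) (hq' : ∀ n, 0 < q' n)
    (hmin : (Finset.univ.inf' (univ_nonempty_iff.mpr ⟨⟨0, hN⟩⟩) q') <
      Finset.univ.inf' (univ_nonempty_iff.mpr ⟨⟨0, hN⟩⟩) q) :
    ∃ α₀ : ℝ, ∀ α : ℝ, α₀ < α → α ≠ 1 →
      ∑ n, q' n ^ (1 - α) / (1 - α) < ∑ n, q n ^ (1 - α) / (1 - α) := by
  have hne : (Finset.univ : Finset (Fin N)).Nonempty := univ_nonempty_iff.mpr ⟨⟨0, hN⟩⟩
  set m : ℝ := Finset.univ.inf' hne q with hm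
  set m' : ℝ := Finset.univ.inf' hne q' with hm'
  obtain ⟨n₀, -, hn₀⟩ := Finset.exists_mem_eq_inf' hne q'
  have hm'eq : m' = q' n₀ := hn₀
  have hm'pos : 0 < m' := by rw [hm'eq]; exact hq' n₀
  have hmpos : 0 < m := lt_trans hm'pos hmin
  have hr : 1 < m / m' := (one_lt_div hm'pos).mpr hmin
  have hlogr : 0 < Real.log (m / m') := Real.log_pos hr
  refine ⟨max 1 (1 + Real.log N / Real.log (m / m')), fun α hα hα1 => ?_⟩
  have hα1' : 1 < α := lt_of_le_of_lt (le_max_left _ _) hα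
  have hβ : 0 < α - 1 := by linarith
  have hexp : 1 - α < 0 := by linarith
  -- key: N < (m/m')^(α-1)
  have hkey : (N : ℝ) < (m / m') ^ (α - 1) := by
    have h1 : Real.log N / Real.log (m / m') < α - 1 := by
      have := lt_of_le_of_lt (le_max_right 1 (1 + Real.log N / Real.log (m / m'))) hα
      linarith
    have h2 : Real.log N < Real.log (m / m') * (α - 1) := by
      rw [div_lt_iff₀ hlogr] at h1
      linarith [h1]
    calc (N : ℝ) = Real.exp (Real.log N) := (Real.exp_log (by exact_mod_cast hN)).symm
      _ < Real.exp (Real.log (m / m') * (α - 1)) := Real.exp_lt_exp.mpr h2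
      _ = (m / m') ^ (α - 1) := (Real.rpow_def_of_pos (by positivity) _).symm
  -- sums inequality
  have hsum : ∑ n, q n ^ (1 - α) < ∑ n, q' n ^ (1 - α) := by
    have hub : ∑ n, q n ^ (1 - α) ≤ (N : ℝ) * m ^ (1 - α) := by
      calc ∑ n, q n ^ (1 - α) ≤ ∑ _n : Fin N, m ^ (1 - α) := by
            refine Finset.sum_le_sum fun n _ => ?_
            exact Real.rpow_le_rpow_of_nonpos hmpos (Finset.inf'_le q (mem_univ n)) hexp.le
        _ = (N : ℝ) * m ^ (1 - α) := by
            simp [Finset.sum_const, Finset.card_univ]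
    have hlb : m' ^ (1 - α) ≤ ∑ n, q' n ^ (1 - α) := by
      have := Finset.single_le_sum (f := fun n => q' n ^ (1 - α))
        (fun n _ => Real.rpow_nonneg (hq' n).le _) (mem_univ n₀)
      simpa [hm'eq] using this
    have hmid : (N : ℝ) * m ^ (1 - α) < m' ^ (1 - α) := by
      have hmexp : 0 < m ^ (1 - α) := Real.rpow_pos_of_pos hmpos _
      have : (N : ℝ) * m ^ (1 - α) < (m / m') ^ (α - 1) * m ^ (1 - α) :=
        mul_lt_mul_of_pos_right hkey hmexp
      refine lt_of_lt_of_le this (le_of_eq ?_)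
      rw [Real.div_rpow hmpos.le hm'pos.le, div_mul_eq_mul_div, ← Real.rpow_add hmpos]
      have h0 : α - 1 + (1 - α) = 0 := by ring
      rw [h0, Real.rpow_zero, one_div, ← Real.rpow_neg hm'pos.le]
      ring_nf
    linarith
  have hfin := div_lt_div_of_neg_of_lt hexp hsum
  rw [← Finset.sum_div, ← Finset.sum_div]
  exact hfin
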